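/- For every natural number l, the Bell number satisfies e · B_l = Σ_{i=0}^{∞} i^l / i! (Dobinski's formula), and in particular B_l ≥ 4^l / (e · 4!). -/

import Mathlib

/-- The `l`-th Bell number: the number of partitions (equivalently, equivalence
relations) of a set with `l` elements. -/
noncomputable def bellNumber (l : ℕ) : ℕ := Nat.card (Setoid (Fin l))

open Finset

namespace DobinskiAux

variable {α β : Type*}

instance [Finite α] : Finite (Setoid α) :=
  Finite.of_injective (fun s : Setoid α => s.r) fun a b h =>
    Setoid.ext fun x y => iff_of_eq (congrFun (congrFun h x) y)

/-- Transport a setoid along an equivalence. -/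
def setoidCongr (e : α ≃ β) : Setoid α ≃ Setoid β where
  toFun r := Setoid.comap e.symm r
  invFun r := Setoid.comap e r
  left_inv r := Setoid.ext fun a b => by
    simp [Setoid.comap_rel]
  right_inv r := Setoid.ext fun a b => by
    simp [Setoid.comap_rel]

/-- The inverse construction: from a set `s` (the set of elements equivalent to the
distinguished point `none`) and a setoid on the complement, build a setoid on `Option β`. -/
def back (s : Set β) (q : Setoid {x : β // x ∉ s}) : Setoid (Option β) where
  r a b :=
    match a, b with
    | none, none => True
    | none, some y => y ∈ s
    | some x, none => x ∈ s
    | some x, some y => (x ∈ s ∧ y ∈ s) ∨ ∃ (hx : x ∉ s) (hy : y ∉ s), q ⟨x, hx⟩ ⟨y, hy⟩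
  iseqv := by
    constructor
    · rintro (_ | x)
      · trivial
      · by_cases hx : x ∈ s
        · exact Or.inl ⟨hx, hx⟩
        · exact Or.inr ⟨hx, hx, q.refl' _⟩
    · rintro (_ | x) (_ | y) h
      · trivial
      · exact h
      · exact h
      · rcases h with ⟨hx, hy⟩ | ⟨hx, hy, h⟩
        · exact Or.inl ⟨hy, hx⟩
        · exact Or.inr ⟨hy, hx, q.symm' h⟩
    · rintro (_ | x) (_ | y) (_ | z) hab hbc
      · trivial
      · exact hbc
      · trivial
      · rcases hbc with ⟨hy, hz⟩ | ⟨hy, hz, h⟩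
        · exact hz
        · exact absurd hab hy
      · exact hab
      · exact Or.inl ⟨hab, hbc⟩
      · rcases hab with ⟨hx, hy⟩ | ⟨hx, hy, h⟩
        · exact hx
        · exact absurd hbc hy
      · rcases hab with ⟨hx, hy⟩ | ⟨hx, hy, h1⟩
        · rcases hbc with ⟨hy2, hz⟩ | ⟨hy2, hz, h2⟩
          · exact Or.inl ⟨hx, hz⟩
          · exact absurd hy hy2
        · rcases hbc with ⟨hy2, hz⟩ | ⟨hy2, hz, h2⟩
          · exact absurd hy2 hy
          · exact Or.inr ⟨hx, hz, q.trans' h1 h2⟩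

/-- Setoids on `Option β` correspond to pairs of a subset of `β` (the class of `none`)
and a setoid on the complement. -/
def optionEquiv (β : Type*) : Setoid (Option β) ≃ Σ s : Set β, Setoid {x : β // x ∉ s} where
  toFun r := ⟨{x | r (some x) none}, Setoid.comap (fun x => some x.1) r⟩
  invFun p := back p.1 p.2
  left_inv r := by
    apply Setoid.ext
    rintro (_ | x) (_ | y)
    · exact iff_of_true trivial (r.refl' _)
    · exact ⟨fun h => r.symm' h, fun h => r.symm' h⟩
    · exact Iff.rfl
    · constructor
      · rintro (⟨hx, hy⟩ | ⟨hx, hy, h⟩)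
        · exact r.trans' hx (r.symm' hy)
        · exact h
      · intro h
        by_cases hx : r (some x) none
        · exact Or.inl ⟨hx, r.trans' (r.symm' h) hx⟩
        · exact Or.inr ⟨hx, fun hy => hx (r.trans' h hy), h⟩
  right_inv := by
    rintro ⟨s, q⟩
    show (⟨s, Setoid.comap (fun x : {x : β // x ∉ s} => some x.1) (back s q)⟩ :
      Σ s : Set β, Setoid {x : β // x ∉ s}) = ⟨s, q⟩
    refine congrArg (Sigma.mk s) (Setoid.ext fun x y => ?_)
    constructor
    · rintro (⟨hx, hy⟩ | ⟨hx, hy, h⟩)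
      · exact absurd hx x.2
      · exact h
    · intro h
      exact Or.inr ⟨x.2, y.2, h⟩

lemma bell_congr (e : α ≃ β) : Nat.card (Setoid α) = Nat.card (Setoid β) :=
  Nat.card_congr (setoidCongr e)

lemma bell_fintype (α : Type*) [Fintype α] :
    Nat.card (Setoid α) = bellNumber (Fintype.card α) :=
  bell_congr (Fintype.equivFin α)

/-- The Bell recurrence `B_{n+1} = ∑ C(n,k) B_k`. -/
theorem bell_rec (n : ℕ) :
    bellNumber (n + 1) = ∑ k ∈ range (n + 1), n.choose k * bellNumber k := by
  classical
  have h1 : bellNumber (n + 1) =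
      Nat.card (Σ t : Finset (Fin n), Setoid {x : Fin n // x ∉ t}) := by
    refine Nat.card_congr ?_
    refine ((setoidCongr finSuccEquivLast).trans (optionEquiv (Fin n))).trans ?_
    exact (Equiv.sigmaCongrLeft
      (β := fun s : Set (Fin n) => Setoid {x : Fin n // x ∉ s})
      (Fintype.finsetEquivSet (α := Fin n))).symm
  haveI : ∀ t : Finset (Fin n), Fintype (Setoid {x : Fin n // x ∉ t}) :=
    fun _ => Fintype.ofFinite _
  rw [h1, Nat.card_eq_fintype_card, Fintype.card_sigma]
  have h2 : ∀ t : Finset (Fin n),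
      Fintype.card (Setoid {x : Fin n // x ∉ t}) = bellNumber (n - t.card) := by
    intro t
    rw [← Nat.card_eq_fintype_card, bell_fintype]
    congr 1
    rw [Fintype.card_subtype_compl]
    simp [Fintype.card_coe]
  simp_rw [h2]
  rw [← Finset.sum_attach]
  rw [show (Finset.univ : Finset (Finset (Fin n))) = Finset.univ.powerset from
    (Finset.powerset_univ).symm] at *
  rw [Finset.sum_attach (Finset.univ.powerset) (fun t => bellNumber (n - t.card))]
  rw [Finset.sum_powerset]
  have h3 : ∀ j ∈ range (Finset.univ.card (α := Fin n) + 1),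
      (∑ t ∈ Finset.powersetCard j (Finset.univ : Finset (Fin n)),
        bellNumber (n - t.card)) = n.choose j * bellNumber (n - j) := by
    intro j _
    rw [Finset.sum_powersetCard j Finset.univ (fun m => bellNumber (n - m))]
    simp [Finset.card_univ, mul_comm]
  rw [Finset.sum_congr rfl h3]
  simp only [Finset.card_univ, Fintype.card_fin]
  rw [← Finset.sum_range_reflect (fun k => n.choose k * bellNumber k) (n + 1)]
  refine Finset.sum_congr rfl fun k hk => ?_
  have hk' : k ≤ n := Nat.lt_succ_iff.mp (Finset.mem_range.mp hk)
  have hxx : n + 1 - 1 - k = n - k := by omega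
  rw [hxx, Nat.choose_symm hk']

/-- The Dobinski series. -/
noncomputable def F (l : ℕ) : ℝ := ∑' i : ℕ, (i : ℝ) ^ l / i.factorial

lemma summable_F (l : ℕ) : Summable (fun i : ℕ => (i : ℝ) ^ l / i.factorial) := by
  refine Summable.of_nonneg_of_le (fun i => by positivity) (fun i => ?_)
    (Real.summable_pow_div_factorial (2 ^ l))
  gcongr
  calc (i : ℝ) ^ l ≤ ((2 : ℝ) ^ i) ^ l := by
        refine pow_le_pow_left₀ (by positivity) ?_ l
        exact_mod_cast (Nat.lt_two_pow_self (n := i)).le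
    _ = ((2 : ℝ) ^ l) ^ i := by rw [← pow_mul, ← pow_mul, mul_comm]

lemma F_zero : F 0 = Real.exp 1 := by
  rw [F, Real.exp_eq_exp_ℝ, NormedSpace.exp_eq_tsum_div]
  simp

lemma F_rec (n : ℕ) : F (n + 1) = ∑ k ∈ range (n + 1), n.choose k * F k := by
  have key : ∀ j : ℕ, ((j + 1 : ℕ) : ℝ) ^ (n + 1) / ((j + 1).factorial : ℝ)
      = ∑ k ∈ range (n + 1), (n.choose k : ℝ) * ((j : ℝ) ^ k / j.factorial) := by
    intro j
    have hj : ((j : ℝ) + 1) ≠ 0 := by positivity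
    have hfac : (j.factorial : ℝ) ≠ 0 := by
      exact_mod_cast j.factorial_ne_zero
    have h1 : ((j + 1 : ℕ) : ℝ) ^ (n + 1) / ((j + 1).factorial : ℝ)
        = ((j : ℝ) + 1) ^ n / j.factorial := by
      rw [Nat.factorial_succ]
      push_cast
      rw [pow_succ]
      field_simp
    rw [h1, add_pow, Finset.sum_div]
    refine Finset.sum_congr rfl fun k _ => ?_
    rw [one_pow, mul_one]
    ring
  rw [F, Summable.tsum_eq_zero_add (summable_F (n + 1))]
  have h0 : ((0 : ℕ) : ℝ) ^ (n + 1) / ((Nat.factorial 0 : ℕ) : ℝ) = 0 := by simp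
  rw [h0, zero_add]
  calc (∑' j : ℕ, ((j + 1 : ℕ) : ℝ) ^ (n + 1) / ((j + 1).factorial : ℝ))
      = ∑' j : ℕ, ∑ k ∈ range (n + 1), (n.choose k : ℝ) * ((j : ℝ) ^ k / j.factorial) :=
        tsum_congr key
    _ = ∑ k ∈ range (n + 1), ∑' j : ℕ, (n.choose k : ℝ) * ((j : ℝ) ^ k / j.factorial) :=
        Summable.tsum_finsetSum fun k _ => (summable_F k).mul_left _
    _ = ∑ k ∈ range (n + 1), (n.choose k : ℝ) * F k := by
        refine Finset.sum_congr rfl fun k _ => ?_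
        rw [tsum_mul_left, F]

lemma bell_zero : bellNumber 0 = 1 := by
  have hsub : Subsingleton (Setoid (Fin 0)) :=
    ⟨fun a b => Setoid.ext fun x => x.elim0⟩
  exact Nat.card_eq_one_iff_unique.mpr ⟨hsub, ⟨⊥⟩⟩

theorem dobinski (l : ℕ) : Real.exp 1 * bellNumber l = F l := by
  induction l using Nat.strong_induction_on with
  | _ l ih =>
    match l with
    | 0 => rw [bell_zero, F_zero]; simp
    | n + 1 =>
      rw [bell_rec n, F_rec n]
      push_cast
      rw [Finset.mul_sum]
      refine Finset.sum_congr rfl fun k hk => ?_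
      rw [← ih k (Finset.mem_range.mp hk)]
      ring

end DobinskiAux

/-- Dobinski's formula `e · B_l = ∑_{i=0}^∞ i^l / i!`, and consequently
`B_l ≥ 4^l / (e · 4!)`. -/
theorem stmt_5 (l : ℕ) :
    Real.exp 1 * bellNumber l = ∑' i : ℕ, (i : ℝ) ^ l / i.factorial ∧
    (bellNumber l : ℝ) ≥ 4 ^ l / (Real.exp 1 * 24) := by
  constructor
  · exact DobinskiAux.dobinski l
  · have h4 : ((4 : ℕ) : ℝ) ^ l / ((4 : ℕ).factorial : ℝ) ≤ ∑' i : ℕ, (i : ℝ) ^ l / i.factorial :=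
      Summable.le_tsum (DobinskiAux.summable_F l) 4 fun j _ => by positivity
    have h4' : (4 : ℝ) ^ l / 24 ≤ Real.exp 1 * bellNumber l := by
      rw [DobinskiAux.dobinski l, DobinskiAux.F]
      convert h4 using 2 <;> norm_num [Nat.factorial]
    have he : (0 : ℝ) < Real.exp 1 := Real.exp_pos 1
    rw [ge_iff_le, div_le_iff₀ (by positivity)]
    rw [div_le_iff₀ (by norm_num : (0 : ℝ) < 24)] at h4'
    nlinarith
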